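/- Let w₁, w₂, w₃ be unit complex numbers and let A be the Hermitian form on ℂ⁴ given by A((a,b,c,d),(a',b',c',d')) = (1/(4i))·( b·conj(a') - a·conj(b') + d·conj(c') - c·conj(d') - w₁·b·conj(a') + a·conj(w₁·b') - w₃·d·conj(w₂·c') + w₂·c·conj(w₃·d') ). Let V = {(a,b,c,d) ∈ ℂ⁴ : a+b+c+d=0, a+w₁b+w₂c+w₃d=0}, V_a = {v ∈ V : c = 0} and V_{a'} = {v ∈ V : a = 0}. Then for all x ∈ V_a and y ∈ V_{a'}, A(x,y) = 0. -/

import Mathlib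

open Complex

/-- The Hodge (area) Hermitian form on the ρ-isotypic component. -/
noncomputable def hodgeForm (w1 w2 w3 : ℂ) (x y : Fin 4 → ℂ) : ℂ :=
  (1 / (4 * Complex.I)) *
    (x 1 * (starRingEnd ℂ) (y 0) - x 0 * (starRingEnd ℂ) (y 1)
      + x 3 * (starRingEnd ℂ) (y 2) - x 2 * (starRingEnd ℂ) (y 3)
      - w1 * x 1 * (starRingEnd ℂ) (y 0) + x 0 * (starRingEnd ℂ) (w1 * y 1)
      - w3 * x 3 * (starRingEnd ℂ) (w2 * y 2) + w2 * x 2 * (starRingEnd ℂ) (w3 * y 3))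

theorem hodge_form_orthogonal (w1 w2 w3 : ℂ)
    (hw1 : ‖w1‖ = 1) (hw2 : ‖w2‖ = 1) (hw3 : ‖w3‖ = 1)
    (x y : Fin 4 → ℂ)
    (hx1 : x 0 + x 1 + x 2 + x 3 = 0) (hx2 : x 0 + w1 * x 1 + w2 * x 2 + w3 * x 3 = 0)
    (hy1 : y 0 + y 1 + y 2 + y 3 = 0) (hy2 : y 0 + w1 * y 1 + w2 * y 2 + w3 * y 3 = 0)
    (hxc : x 2 = 0) (hya : y 0 = 0) :
    hodgeForm w1 w2 w3 x y = 0 := by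
  have hv1 : w1 * (starRingEnd ℂ) w1 = 1 := by
    rw [Complex.mul_conj, Complex.normSq_eq_norm_sq, hw1]; norm_num
  have hv3 : w3 * (starRingEnd ℂ) w3 = 1 := by
    rw [Complex.mul_conj, Complex.normSq_eq_norm_sq, hw3]; norm_num
  have hy1c : (starRingEnd ℂ) (y 1) + (starRingEnd ℂ) (y 2) + (starRingEnd ℂ) (y 3) = 0 := by
    have h := congrArg (starRingEnd ℂ) hy1
    simpa [hya] using h
  have hy2c : (starRingEnd ℂ) w1 * (starRingEnd ℂ) (y 1)
      + (starRingEnd ℂ) w2 * (starRingEnd ℂ) (y 2)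
      + (starRingEnd ℂ) w3 * (starRingEnd ℂ) (y 3) = 0 := by
    have h := congrArg (starRingEnd ℂ) hy2
    simpa [hya] using h
  have hx1' : x 0 + x 1 + x 3 = 0 := by linear_combination hx1 - hxc
  have hx2' : x 0 + w1 * x 1 + w3 * x 3 = 0 := by linear_combination hx2 - w2 * hxc
  unfold hodgeForm
  rw [hxc, hya]
  simp only [map_zero, mul_zero, zero_mul, map_mul]
  linear_combination (1 / (4 * Complex.I)) *
    (-(starRingEnd ℂ) (y 1) * hx1'
      + (starRingEnd ℂ) (y 1) * (starRingEnd ℂ) w1 * hx2'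
      + x 3 * hy1c - w3 * x 3 * hy2c
      - x 1 * (starRingEnd ℂ) (y 1) * hv1
      + x 3 * (starRingEnd ℂ) (y 3) * hv3)
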